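/- Let T ∈ 𝕋 be a caterpillar, not a star, with n pendant vertices and non-pendant vertices v_1, ..., v_k forming a path (v_i adjacent to v_{i+1}), where v_i is adjacent to t_i pendant vertices. Then the number of edges of the group inverse graph T# equals n + t_1 t_2 + t_2 t_3 + ⋯ + t_{k−1} t_k. -/
import Mathlib


open SimpleGraph

/-- `X` is the group inverse of `A`. -/
def IsGroupInverse {n : Type*} [Fintype n] (A X : Matrix n n ℝ) : Prop :=
  A * X * A = A ∧ X * A * X = X ∧ A * X = X * A

/-- A matching of a graph: a set of pairwise non-incident edges. -/
def IsMatching {V : Type*} (G : SimpleGraph V) (M : Finset (Sym2 V)) : Prop :=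
  (↑M : Set (Sym2 V)) ⊆ G.edgeSet ∧
    ∀ e ∈ M, ∀ f ∈ M, e ≠ f → ∀ v : V, ¬(v ∈ e ∧ v ∈ f)

/-- A maximum matching: a matching of maximum cardinality. -/
def IsMaxMatching {V : Type*} (G : SimpleGraph V) (M : Finset (Sym2 V)) : Prop :=
  IsMatching G M ∧ ∀ N : Finset (Sym2 V), IsMatching G N → N.card ≤ M.card

/-- A nonempty list of edges alternately in and out of `M`,
beginning and ending with edges of `M`. -/
def IsAltEdgeList {V : Type*} (M : Set (Sym2 V)) : List (Sym2 V) → Prop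
  | [] => False
  | [e] => e ∈ M
  | e :: f :: rest => e ∈ M ∧ f ∉ M ∧ IsAltEdgeList M rest

/-- A pair of vertices is maximally matchable if they are joined by a path that is
alternating with respect to some maximum matching. -/
def MaxMatchable {V : Type*} (G : SimpleGraph V) (u v : V) : Prop :=
  ∃ (p : G.Walk u v) (M : Finset (Sym2 V)),
    p.IsPath ∧ IsMaxMatching G M ∧ IsAltEdgeList (↑M) p.edges

/-- `G` is a star: some center `c` is adjacent to exactly the other vertices,
and there are no other edges. -/
def IsStar {V : Type*} (G : SimpleGraph V) : Prop :=
  ∃ c : V, ∀ u v : V, G.Adj u v ↔ ((u = c ∧ v ≠ c) ∨ (v = c ∧ u ≠ c))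

/-- The class 𝕋: trees with at least one non-pendant vertex in which every
non-pendant vertex is adjacent to a pendant vertex. -/
def InClassT {V : Type*} [Fintype V] (T : SimpleGraph V) [DecidableRel T.Adj] : Prop :=
  T.IsTree ∧ (∃ v, T.degree v ≠ 1) ∧
    ∀ v, T.degree v ≠ 1 → ∃ u, T.Adj v u ∧ T.degree u = 1

/-- The number of pendant neighbours of `v`. -/
def pendantNbrs {V : Type*} [Fintype V] [DecidableEq V] (T : SimpleGraph V)
    [DecidableRel T.Adj] (v : V) : ℕ :=
  ((T.neighborFinset v).filter fun u => T.degree u = 1).card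


set_option linter.unusedSectionVars false
set_option linter.unusedVariables false
set_option maxHeartbeats 1000000

section Helpers
variable {V : Type*} [Fintype V] [DecidableEq V]
variable {T : SimpleGraph V} [DecidableRel T.Adj]

lemma uniqNbr {a x y : V} (hd : T.degree a = 1) (hx : T.Adj a x) (hy : T.Adj a y) : x = y := by
  obtain ⟨z, hz⟩ := Finset.card_eq_one.mp hd
  have h1 : x ∈ T.neighborFinset a := (T.mem_neighborFinset a x).mpr hx
  have h2 : y ∈ T.neighborFinset a := (T.mem_neighborFinset a y).mpr hy
  rw [hz, Finset.mem_singleton] at h1 h2; rw [h1, h2]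

variable {k : ℕ} {v : Fin k → V}

lemma spine_not_pend (hrange : ∀ u, T.degree u ≠ 1 ↔ ∃ i, v i = u) (i : Fin k) :
    T.degree (v i) ≠ 1 := (hrange (v i)).mpr ⟨i, rfl⟩

lemma pend_pend_not_adj (hT : InClassT T)
    {a b : V} (ha : T.degree a = 1) (hb : T.degree b = 1) : ¬ T.Adj a b := by
  intro hab
  obtain ⟨w0, hw0⟩ := hT.2.1
  have key : ∀ (x c : V) (p : T.Walk x c), (x = a ∨ x = b) → (c = a ∨ c = b) := by
    intro x c p
    induction p with
    | nil => exact id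
    | @cons x y c h p ih =>
      intro hx
      apply ih
      rcases hx with rfl | rfl
      · exact Or.inr (uniqNbr ha h hab)
      · exact Or.inl (uniqNbr hb h hab.symm)
  obtain ⟨p⟩ := hT.1.isConnected.preconnected a w0
  rcases key a w0 p (Or.inl rfl) with rfl | rfl
  · exact hw0 ha
  · exact hw0 hb

lemma adj_spine_or (hT : InClassT T)
    (hrange : ∀ u, T.degree u ≠ 1 ↔ ∃ i, v i = u)
    {a b : V} (hab : T.Adj a b) :
    (∃ i, v i = a) ∨ (∃ i, v i = b) := by
  by_cases ha : T.degree a = 1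
  · by_cases hb : T.degree b = 1
    · exact absurd hab (pend_pend_not_adj hT ha hb)
    · exact Or.inr ((hrange b).mp hb)
  · exact Or.inl ((hrange a).mp ha)

lemma edge_has_spine (hT : InClassT T)
    (hrange : ∀ u, T.degree u ≠ 1 ↔ ∃ i, v i = u)
    {e : Sym2 V} (he : e ∈ T.edgeSet) : ∃ i, v i ∈ e := by
  induction e using Sym2.ind with
  | _ a b =>
    rw [SimpleGraph.mem_edgeSet] at he
    rcases adj_spine_or hT hrange he with ⟨i, hi⟩ | ⟨i, hi⟩
    · exact ⟨i, by simp [hi]⟩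
    · exact ⟨i, by simp [hi]⟩

/-- a choice of spine vertex in each edge -/
noncomputable def spineIdx (hT : InClassT T)
    (hrange : ∀ u, T.degree u ≠ 1 ↔ ∃ i, v i = u) (i0 : Fin k) (e : Sym2 V) : Fin k :=
  if he : ∃ i, v i ∈ e then he.choose else i0

lemma spineIdx_mem (hT : InClassT T)
    (hrange : ∀ u, T.degree u ≠ 1 ↔ ∃ i, v i = u) (i0 : Fin k)
    {e : Sym2 V} (he : e ∈ T.edgeSet) : v (spineIdx hT hrange i0 e) ∈ e := by
  have h := edge_has_spine hT hrange (v := v) he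
  rw [spineIdx, dif_pos h]
  exact h.choose_spec

lemma matching_card_le (hT : InClassT T)
    (hrange : ∀ u, T.degree u ≠ 1 ↔ ∃ i, v i = u) (i0 : Fin k)
    {N : Finset (Sym2 V)} (hN : IsMatching T N) : N.card ≤ k := by
  have : N.card ≤ (Finset.univ : Finset (Fin k)).card := by
    apply Finset.card_le_card_of_injOn (spineIdx hT hrange i0)
    · intro e he; exact Finset.mem_univ _
    · intro e he f hf hef
      by_contra hne
      exact hN.2 e he f hf hne (v (spineIdx hT hrange i0 e))
        ⟨spineIdx_mem hT hrange i0 (hN.1 he), by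
          rw [hef]; exact spineIdx_mem hT hrange i0 (hN.1 hf)⟩
  simpa using this

/-- valid pendant selections -/
def PendSel (T : SimpleGraph V) [DecidableRel T.Adj] (v : Fin k → V) (f : Fin k → V) : Prop :=
  ∀ i, T.degree (f i) = 1 ∧ T.Adj (v i) (f i)

def matchingOf (v : Fin k → V) (f : Fin k → V) : Finset (Sym2 V) :=
  Finset.image (fun i => s(v i, f i)) Finset.univ

lemma mem_matchingOf {f : Fin k → V} {e : Sym2 V} :
    e ∈ matchingOf v f ↔ ∃ i, e = s(v i, f i) := by
  simp [matchingOf, eq_comm]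

lemma pendSel_exists (hT : InClassT T) (hrange : ∀ u, T.degree u ≠ 1 ↔ ∃ i, v i = u) :
    ∃ f : Fin k → V, PendSel T v f := by
  have h : ∀ i : Fin k, ∃ p, T.degree p = 1 ∧ T.Adj (v i) p := by
    intro i
    obtain ⟨p, hp1, hp2⟩ := hT.2.2 (v i) (spine_not_pend hrange i)
    exact ⟨p, hp2, hp1⟩
  choose f hf1 hf2 using h
  exact ⟨f, fun i => ⟨hf1 i, hf2 i⟩⟩

lemma pendSel_vertex_cases (hrange : ∀ u, T.degree u ≠ 1 ↔ ∃ i, v i = u)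
    (hinj : Function.Injective v)
    {f : Fin k → V} (hf : PendSel T v f) {i j : Fin k} {x : V}
    (hx : x ∈ s(v i, f i)) (hx' : x ∈ s(v j, f j)) : i = j := by
  rw [Sym2.mem_iff] at hx hx'
  rcases hx with rfl | rfl
  · rcases hx' with h | h
    · exact hinj h
    · exact absurd (hf j).1 (by rw [← h]; exact spine_not_pend hrange i)
  · rcases hx' with h | h
    · exact absurd (hf i).1 (by rw [h]; exact spine_not_pend hrange j)
    · exact hinj (uniqNbr (hf i).1 ((hf i).2.symm) (by rw [h]; exact (hf j).2.symm))

lemma matchingOf_card (hrange : ∀ u, T.degree u ≠ 1 ↔ ∃ i, v i = u)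
    (hinj : Function.Injective v)
    {f : Fin k → V} (hf : PendSel T v f) : (matchingOf v f).card = k := by
  rw [matchingOf, Finset.card_image_of_injOn, Finset.card_univ, Fintype.card_fin]
  intro i _ j _ hij
  have hij' : s(v i, f i) = s(v j, f j) := hij
  have h1 : v i ∈ s(v i, f i) := by simp
  have h2 : v i ∈ s(v j, f j) := hij' ▸ h1
  exact pendSel_vertex_cases hrange hinj hf h1 h2

lemma matchingOf_isMax (hT : InClassT T)
    (hrange : ∀ u, T.degree u ≠ 1 ↔ ∃ i, v i = u)
    (hinj : Function.Injective v)
    {f : Fin k → V} (hf : PendSel T v f) : IsMaxMatching T (matchingOf v f) := by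
  have hmatch : IsMatching T (matchingOf v f) := by
    constructor
    · intro e he
      rw [Finset.mem_coe, mem_matchingOf] at he
      obtain ⟨i, rfl⟩ := he
      exact (hf i).2
    · intro e he f' hf' hne x ⟨hxe, hxf⟩
      rw [mem_matchingOf] at he hf'
      obtain ⟨i, rfl⟩ := he
      obtain ⟨j, rfl⟩ := hf'
      exact hne (by rw [pendSel_vertex_cases hrange hinj hf hxe hxf])
  refine ⟨hmatch, fun N hN => ?_⟩
  rw [matchingOf_card hrange hinj hf]
  obtain ⟨w0, hw0⟩ := hT.2.1
  obtain ⟨i0, _⟩ := (hrange w0).mp hw0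
  exact matching_card_le hT hrange i0 hN

lemma maxMatching_card (hT : InClassT T)
    (hrange : ∀ u, T.degree u ≠ 1 ↔ ∃ i, v i = u)
    (hinj : Function.Injective v)
    {M : Finset (Sym2 V)} (hM : IsMaxMatching T M) : M.card = k := by
  obtain ⟨f, hf⟩ := pendSel_exists hT hrange
  have h1 := hM.2 _ (matchingOf_isMax hT hrange hinj hf).1
  have hcard := matchingOf_card hrange hinj hf
  obtain ⟨w0, hw0⟩ := hT.2.1
  obtain ⟨i0, _⟩ := (hrange w0).mp hw0
  exact le_antisymm (matching_card_le hT hrange i0 hM.1) (hcard ▸ h1)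

lemma maxM_struct (hT : InClassT T)
    (hrange : ∀ u, T.degree u ≠ 1 ↔ ∃ i, v i = u)
    (hinj : Function.Injective v)
    {M : Finset (Sym2 V)} (hM : IsMaxMatching T M) {a b : V} (he : s(a,b) ∈ M) :
    ∃ i p, T.degree p = 1 ∧ T.Adj (v i) p ∧ s(a,b) = s(v i, p) := by
  have hab : T.Adj a b := (T.mem_edgeSet).mp (hM.1.1 he)
  by_cases hb : T.degree b = 1
  · by_cases ha : T.degree a = 1
    · exact absurd hab (pend_pend_not_adj hT ha hb)
    · obtain ⟨i, hi⟩ := (hrange a).mp ha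
      exact ⟨i, b, hb, hi ▸ hab, by rw [hi]⟩
  · by_cases ha : T.degree a = 1
    · obtain ⟨j, hj⟩ := (hrange b).mp hb
      exact ⟨j, a, ha, hj ▸ hab.symm, by rw [hj, Sym2.eq_swap]⟩
    · exfalso
      obtain ⟨i, hi⟩ := (hrange a).mp ha
      obtain ⟨j, hj⟩ := (hrange b).mp hb
      subst hi hj
      obtain ⟨w0, hw0⟩ := hT.2.1
      obtain ⟨i0, _⟩ := (hrange w0).mp hw0
      set F := spineIdx (T := T) (v := v) hT hrange i0 with hF
      have hinjF : Set.InjOn F ↑M := by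
        intro e he' f hf' hef
        by_contra hne
        exact hM.1.2 e he' f hf' hne (v (F e))
          ⟨spineIdx_mem hT hrange i0 (hM.1.1 he'), by
            rw [hef]; exact spineIdx_mem hT hrange i0 (hM.1.1 hf')⟩
      have himg : Finset.image F M = Finset.univ := by
        apply Finset.eq_univ_of_card
        rw [Finset.card_image_of_injOn hinjF, maxMatching_card hT hrange hinj hM,
          Fintype.card_fin]
      have hsurj : ∀ m : Fin k, ∃ e' ∈ M, F e' = m := by
        intro m
        have : m ∈ Finset.image F M := himg ▸ Finset.mem_univ m
        simpa using this
      have hij : i ≠ j := fun h => hab.ne (congrArg v h)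
      have hFe : v (F s(v i, v j)) ∈ s(v i, v j) :=
        spineIdx_mem hT hrange i0 (hM.1.1 he)
      rw [Sym2.mem_iff] at hFe
      have key : ∀ m : Fin k, v m ∈ s(v i, v j) → F s(v i, v j) ≠ m → False := by
        intro m hm hFm
        obtain ⟨e', he', hFe'⟩ := hsurj m
        have hne : s(v i, v j) ≠ e' := by
          intro h; exact hFm (h ▸ hFe')
        exact hM.1.2 _ he e' he' hne (v m)
          ⟨hm, by rw [← hFe']; exact spineIdx_mem hT hrange i0 (hM.1.1 he')⟩
      rcases hFe with h | h
      · exact key j (by simp) (fun hh => hij ((hinj h).symm.trans hh))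
      · exact key i (by simp) (fun hh => hij (hh.symm.trans (hinj h)))

lemma altlist_head {M : Set (Sym2 V)} {e : Sym2 V} {l : List (Sym2 V)}
    (h : IsAltEdgeList M (e :: l)) : e ∈ M := by
  cases l with
  | nil => exact h
  | cons f rest => exact h.1

lemma forward_char (hT : InClassT T)
    (hrange : ∀ u, T.degree u ≠ 1 ↔ ∃ i, v i = u)
    (hinj : Function.Injective v)
    (hpath : ∀ i j : Fin k, T.Adj (v i) (v j) ↔ (i.val + 1 = j.val ∨ j.val + 1 = i.val))
    {u w : V} (h : MaxMatchable T u w) :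
    (∃ i p, T.degree p = 1 ∧ T.Adj (v i) p ∧ s(u, w) = s(v i, p)) ∨
    (∃ i j : Fin k, i.val + 1 = j.val ∧ ∃ p q, T.degree p = 1 ∧ T.degree q = 1 ∧
      T.Adj (v i) p ∧ T.Adj (v j) q ∧ s(u, w) = s(p, q)) := by
  obtain ⟨P, M, hP, hM, halt⟩ := h
  cases P with
  | nil => simp [IsAltEdgeList] at halt
  | @cons _ x _ h1 q =>
    cases q with
    | nil =>
      rw [Walk.edges_cons, Walk.edges_nil] at halt
      have he : s(u, w) ∈ M := halt
      exact Or.inl (maxM_struct hT hrange hinj hM he)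
    | @cons _ y _ h2 r =>
      cases r with
      | nil =>
        rw [Walk.edges_cons, Walk.edges_cons, Walk.edges_nil] at halt
        simp [IsAltEdgeList] at halt
      | @cons _ z _ h3 s2 =>
        rw [Walk.edges_cons, Walk.edges_cons, Walk.edges_cons] at halt
        have he1 : s(u, x) ∈ (↑M : Set (Sym2 V)) := halt.1
        have he2 : s(x, y) ∉ (↑M : Set (Sym2 V)) := halt.2.1
        have halt3 : IsAltEdgeList (↑M) (s(y, z) :: s2.edges) := halt.2.2
        have he3 : s(y, z) ∈ (↑M : Set (Sym2 V)) := altlist_head halt3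
        rw [Walk.cons_isPath_iff] at hP
        obtain ⟨hP1, hu⟩ := hP
        rw [Walk.cons_isPath_iff] at hP1
        obtain ⟨hP2, hx⟩ := hP1
        rw [Walk.cons_isPath_iff] at hP2
        obtain ⟨hP3, hy⟩ := hP2
        have huy : u ≠ y := by
          intro hh; subst hh
          exact hu (by rw [Walk.support_cons]; exact List.mem_cons_of_mem _ (Walk.start_mem_support _))
        have hxz : x ≠ z := by
          intro hh; subst hh
          exact hx (by rw [Walk.support_cons]; exact List.mem_cons_of_mem _ (Walk.start_mem_support _))
        obtain ⟨i, p1, hp1deg, hp1adj, heq1⟩ := maxM_struct hT hrange hinj hM he1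
        rw [Sym2.eq_iff] at heq1
        have hu_pend : T.degree u = 1 ∧ x = v i := by
          rcases heq1 with ⟨hu1, hx1⟩ | ⟨hu1, hx1⟩
          · exfalso
            exact huy (uniqNbr (hx1 ▸ hp1deg) h1.symm h2)
          · exact ⟨hu1 ▸ hp1deg, hx1⟩
        obtain ⟨hupend, hxvi⟩ := hu_pend
        obtain ⟨j, p3, hp3deg, hp3adj, heq3⟩ := maxM_struct hT hrange hinj hM he3
        rw [Sym2.eq_iff] at heq3
        have hz_pend : T.degree z = 1 ∧ y = v j := by
          rcases heq3 with ⟨hy1, hz1⟩ | ⟨hy1, hz1⟩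
          · exact ⟨hz1 ▸ hp3deg, hy1⟩
          · exfalso
            exact hxz.symm (uniqNbr (hy1 ▸ hp3deg) h2.symm h3).symm
        obtain ⟨hzpend, hyvj⟩ := hz_pend
        cases s2 with
        | nil =>
          have hadj : T.Adj (v i) (v j) := by rw [← hxvi, ← hyvj]; exact h2
          rcases (hpath i j).mp hadj with hij | hij
          · exact Or.inr ⟨i, j, hij, u, w, hupend, hzpend,
              hxvi ▸ h1.symm, hyvj ▸ h3, rfl⟩
          · exact Or.inr ⟨j, i, hij, w, u, hzpend, hupend,
              hyvj ▸ h3, hxvi ▸ h1.symm, Sym2.eq_swap⟩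
        | @cons _ z2 _ h4 s3 =>
          exfalso
          have hyz2 : y ≠ z2 := by
            intro hh; subst hh
            exact hy (by rw [Walk.support_cons]; exact List.mem_cons_of_mem _ (Walk.start_mem_support _))
          exact hyz2 (uniqNbr hzpend h3.symm h4)

lemma backward_pendant (hT : InClassT T)
    (hrange : ∀ u, T.degree u ≠ 1 ↔ ∃ i, v i = u)
    (hinj : Function.Injective v)
    {i : Fin k} {p : V} (hdeg : T.degree p = 1) (hadj : T.Adj (v i) p) :
    MaxMatchable T p (v i) := by
  obtain ⟨f0, hf0⟩ := pendSel_exists hT hrange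
  set f := Function.update f0 i p with hfdef
  have hf : PendSel T v f := by
    intro l
    by_cases hl : l = i
    · subst hl
      have hfl : f l = p := by rw [hfdef, Function.update_self]
      rw [hfl]; exact ⟨hdeg, hadj⟩
    · have hfl : f l = f0 l := by rw [hfdef, Function.update_of_ne hl]
      rw [hfl]; exact hf0 l
  refine ⟨Walk.cons hadj.symm Walk.nil, matchingOf v f, ?_, matchingOf_isMax hT hrange hinj hf, ?_⟩
  · rw [Walk.cons_isPath_iff]
    exact ⟨Walk.IsPath.nil, by simp [hadj.ne']⟩
  · rw [Walk.edges_cons, Walk.edges_nil]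
    have : s(p, v i) ∈ matchingOf v f := by
      rw [mem_matchingOf]
      exact ⟨i, by rw [Sym2.eq_swap, hfdef, Function.update_self]⟩
    exact this

lemma backward_cross (hT : InClassT T)
    (hrange : ∀ u, T.degree u ≠ 1 ↔ ∃ i, v i = u)
    (hinj : Function.Injective v)
    (hpath : ∀ i j : Fin k, T.Adj (v i) (v j) ↔ (i.val + 1 = j.val ∨ j.val + 1 = i.val))
    {i j : Fin k} (hij : i.val + 1 = j.val) {p q : V}
    (hpdeg : T.degree p = 1) (hqdeg : T.degree q = 1)
    (hpadj : T.Adj (v i) p) (hqadj : T.Adj (v j) q) :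
    MaxMatchable T p q := by
  have hijne : i ≠ j := by intro h; rw [h] at hij; omega
  obtain ⟨f0, hf0⟩ := pendSel_exists hT hrange
  set f := Function.update (Function.update f0 i p) j q with hfdef
  have hfi : f i = p := by
    rw [hfdef, Function.update_of_ne hijne, Function.update_self]
  have hfj : f j = q := by rw [hfdef, Function.update_self]
  have hf : PendSel T v f := by
    intro l
    by_cases hl : l = j
    · subst hl; rw [hfj]; exact ⟨hqdeg, hqadj⟩
    · by_cases hl' : l = i
      · subst hl'; rw [hfi]; exact ⟨hpdeg, hpadj⟩
      · rw [hfdef, Function.update_of_ne hl, Function.update_of_ne hl']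
        exact ⟨(hf0 l).1, (hf0 l).2⟩
  have hvij : T.Adj (v i) (v j) := (hpath i j).mpr (Or.inl hij)
  have hpvi : p ≠ v i := hpadj.ne'
  have hpvj : p ≠ v j := by
    intro h; exact spine_not_pend hrange j (h ▸ hpdeg)
  have hqvi : q ≠ v i := by
    intro h; exact spine_not_pend hrange i (h ▸ hqdeg)
  have hqvj : q ≠ v j := hqadj.ne'
  have hpq : p ≠ q := by
    intro h
    exact hijne (hinj (uniqNbr hpdeg hpadj.symm (h ▸ hqadj.symm)))
  refine ⟨Walk.cons hpadj.symm (Walk.cons hvij (Walk.cons hqadj Walk.nil)),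
    matchingOf v f, ?_, matchingOf_isMax hT hrange hinj hf, ?_⟩
  · rw [Walk.cons_isPath_iff, Walk.cons_isPath_iff, Walk.cons_isPath_iff]
    refine ⟨⟨⟨Walk.IsPath.nil, by simp [hqvj.symm]⟩, ?_⟩, ?_⟩
    · simp [Walk.support_cons]
      exact ⟨hinj.ne hijne, hqvi.symm⟩
    · simp [Walk.support_cons]
      exact ⟨hpvi.symm ∘ Eq.symm, hpvj.symm ∘ Eq.symm, hpq.symm ∘ Eq.symm⟩
  · rw [Walk.edges_cons, Walk.edges_cons, Walk.edges_cons, Walk.edges_nil]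
    have h1 : s(p, v i) ∈ matchingOf v f := by
      rw [mem_matchingOf]; exact ⟨i, by rw [Sym2.eq_swap, hfi]⟩
    have h3 : s(v j, q) ∈ matchingOf v f := by
      rw [mem_matchingOf]; exact ⟨j, by rw [hfj]⟩
    have h2 : s(v i, v j) ∉ matchingOf v f := by
      rw [mem_matchingOf]
      rintro ⟨l, hl⟩
      rw [Sym2.eq_iff] at hl
      rcases hl with ⟨_, hl2⟩ | ⟨hl1, _⟩
      · exact spine_not_pend hrange j (hl2 ▸ (hf l).1)
      · exact spine_not_pend hrange i (hl1 ▸ (hf l).1)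
    exact ⟨h1, h2, h3⟩

def pendantEdges (T : SimpleGraph V) [DecidableRel T.Adj] (v : Fin k → V) : Finset (Sym2 V) :=
  ((Finset.univ : Finset (Fin k × V)).filter fun ip =>
    T.degree ip.2 = 1 ∧ T.Adj (v ip.1) ip.2).image fun ip => s(v ip.1, ip.2)

lemma mem_pendantEdges {e : Sym2 V} :
    e ∈ pendantEdges T v ↔ ∃ i p, T.degree p = 1 ∧ T.Adj (v i) p ∧ e = s(v i, p) := by
  rw [pendantEdges, Finset.mem_image]
  constructor
  · rintro ⟨ip, hip, rfl⟩
    rw [Finset.mem_filter] at hip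
    exact ⟨ip.1, ip.2, hip.2.1, hip.2.2, rfl⟩
  · rintro ⟨i, p, h1, h2, rfl⟩
    exact ⟨(i, p), Finset.mem_filter.mpr ⟨Finset.mem_univ _, h1, h2⟩, rfl⟩

lemma card_pendantEdges (hT : InClassT T)
    (hrange : ∀ u, T.degree u ≠ 1 ↔ ∃ i, v i = u)
    (hinj : Function.Injective v) :
    (pendantEdges T v).card = (Finset.univ.filter fun u => T.degree u = 1).card := by
  rw [pendantEdges, Finset.card_image_of_injOn]
  · apply Finset.card_bij (fun ip _ => ip.2)
    · intro ip hip
      rw [Finset.mem_filter] at hip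
      exact Finset.mem_filter.mpr ⟨Finset.mem_univ _, hip.2.1⟩
    · intro a ha b hb hab
      rw [Finset.mem_filter] at ha hb
      have h2 : T.Adj a.2 (v b.1) := by rw [hab]; exact hb.2.2.symm
      have := hinj (uniqNbr ha.2.1 ha.2.2.symm h2)
      exact Prod.ext this hab
    · intro u hu
      rw [Finset.mem_filter] at hu
      obtain ⟨a, ha⟩ := Finset.card_eq_one.mp hu.2
      have haadj : T.Adj u a := by
        have : a ∈ T.neighborFinset u := ha ▸ Finset.mem_singleton_self a
        exact (T.mem_neighborFinset u a).mp this
      have hanp : T.degree a ≠ 1 := fun h => pend_pend_not_adj hT hu.2 h haadj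
      obtain ⟨i, hi⟩ := (hrange a).mp hanp
      exact ⟨(i, u), Finset.mem_filter.mpr ⟨Finset.mem_univ _, hu.2, hi ▸ haadj.symm⟩, rfl⟩
  · intro a ha b hb heq
    rw [Finset.mem_coe, Finset.mem_filter] at ha hb
    rw [Sym2.eq_iff] at heq
    rcases heq with ⟨h1, h2⟩ | ⟨h1, h2⟩
    · exact Prod.ext (hinj h1) h2
    · exact absurd (hb.2.1) (h1 ▸ spine_not_pend hrange a.1)

def crossEdges (T : SimpleGraph V) [DecidableRel T.Adj] (v : Fin k → V) (i : Fin k) :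
    Finset (Sym2 V) :=
  if h : i.val + 1 < k then
    (((T.neighborFinset (v i)).filter fun u => T.degree u = 1) ×ˢ
      ((T.neighborFinset (v ⟨i.val + 1, h⟩)).filter fun u => T.degree u = 1)).image
      fun pq => s(pq.1, pq.2)
  else ∅

lemma mem_crossEdges {i : Fin k} {e : Sym2 V} :
    e ∈ crossEdges T v i ↔ ∃ (h : i.val + 1 < k), ∃ p q, T.degree p = 1 ∧ T.degree q = 1 ∧
      T.Adj (v i) p ∧ T.Adj (v ⟨i.val + 1, h⟩) q ∧ e = s(p, q) := by
  rw [crossEdges]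
  split_ifs with h
  · rw [Finset.mem_image]
    constructor
    · rintro ⟨⟨p, q⟩, hpq, rfl⟩
      rw [Finset.mem_product, Finset.mem_filter, Finset.mem_filter,
        SimpleGraph.mem_neighborFinset, SimpleGraph.mem_neighborFinset] at hpq
      exact ⟨h, p, q, hpq.1.2, hpq.2.2, hpq.1.1, hpq.2.1, rfl⟩
    · rintro ⟨h', p, q, h1, h2, h3, h4, rfl⟩
      refine ⟨(p, q), ?_, rfl⟩
      rw [Finset.mem_product, Finset.mem_filter, Finset.mem_filter,
        SimpleGraph.mem_neighborFinset, SimpleGraph.mem_neighborFinset]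
      exact ⟨⟨h3, h1⟩, h4, h2⟩
  · constructor
    · intro he; exact absurd he (Finset.notMem_empty e)
    · rintro ⟨h', _⟩; exact absurd h' h

lemma card_crossEdges (hrange : ∀ u, T.degree u ≠ 1 ↔ ∃ i, v i = u)
    (hinj : Function.Injective v) (i : Fin k) :
    (crossEdges T v i).card = if h : i.val + 1 < k then
      pendantNbrs T (v i) * pendantNbrs T (v ⟨i.val + 1, h⟩) else 0 := by
  rw [crossEdges]
  split_ifs with h
  · rw [Finset.card_image_of_injOn, Finset.card_product]
    · rfl
    · rintro ⟨p, q⟩ hpq ⟨p', q'⟩ hpq' heq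
      rw [Finset.mem_coe, Finset.mem_product, Finset.mem_filter, Finset.mem_filter,
        SimpleGraph.mem_neighborFinset, SimpleGraph.mem_neighborFinset] at hpq hpq'
      dsimp only at hpq hpq'
      rw [Sym2.eq_iff] at heq
      dsimp only at heq
      rcases heq with ⟨h1, h2⟩ | ⟨h1, h2⟩
      · exact Prod.ext h1 h2
      · exfalso
        have hadj2 : T.Adj p (v ⟨i.val + 1, h⟩) := by
          rw [h1]; exact hpq'.2.1.symm
        have := hinj (uniqNbr hpq.1.2 hpq.1.1.symm hadj2)
        have : i.val = i.val + 1 := congrArg Fin.val this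
        omega
  · rfl

lemma crossEdges_disjoint (hrange : ∀ u, T.degree u ≠ 1 ↔ ∃ i, v i = u)
    (hinj : Function.Injective v) {i j : Fin k} (hij : i ≠ j) :
    Disjoint (crossEdges T v i) (crossEdges T v j) := by
  rw [Finset.disjoint_left]
  intro e hei hej
  rw [mem_crossEdges] at hei hej
  obtain ⟨hi, p, q, hp1, hq1, hp2, hq2, rfl⟩ := hei
  obtain ⟨hj, p', q', hp1', hq1', hp2', hq2', heq⟩ := hej
  rw [Sym2.eq_iff] at heq
  rcases heq with ⟨h1, h2⟩ | ⟨h1, h2⟩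
  · apply hij
    apply hinj
    apply uniqNbr hp1 hp2.symm
    rw [h1]; exact hp2'.symm
  · have e1 : v i = v ⟨j.val + 1, hj⟩ := by
      apply uniqNbr hp1 hp2.symm
      rw [h1]; exact hq2'.symm
    have e2 : v ⟨i.val + 1, hi⟩ = v j := by
      apply uniqNbr hq1 hq2.symm
      rw [h2]; exact hp2'.symm
    have e1' : i.val = j.val + 1 := congrArg Fin.val (hinj e1)
    have e2' : i.val + 1 = j.val := congrArg Fin.val (hinj e2)
    omega

lemma pendant_cross_disjoint (hrange : ∀ u, T.degree u ≠ 1 ↔ ∃ i, v i = u) :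
    Disjoint (pendantEdges T v) (Finset.univ.biUnion (crossEdges T v)) := by
  rw [Finset.disjoint_left]
  intro e he1 he2
  rw [mem_pendantEdges] at he1
  rw [Finset.mem_biUnion] at he2
  obtain ⟨i, p, hp1, hp2, rfl⟩ := he1
  obtain ⟨j, _, hej⟩ := he2
  rw [mem_crossEdges] at hej
  obtain ⟨hj, p', q', hp1', hq1', hp2', hq2', heq⟩ := hej
  rw [Sym2.eq_iff] at heq
  rcases heq with ⟨h1, _⟩ | ⟨h1, _⟩
  · exact spine_not_pend hrange i (h1 ▸ hp1')
  · exact spine_not_pend hrange i (h1 ▸ hq1')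

end Helpers


/-- For a caterpillar in 𝕋 (not a star) with n pendant vertices and
non-pendant vertices v₁,…,v_k forming a path, where vᵢ has tᵢ pendant neighbours,
the number of edges of the group inverse graph is n + t₁t₂ + t₂t₃ + ⋯ + t_{k−1}t_k. -/
theorem classT_caterpillar_edge_count {V : Type*} [Fintype V] [DecidableEq V]
    (T : SimpleGraph V) [DecidableRel T.Adj] (hT : InClassT T) (hstar : ¬ IsStar T)
    (k : ℕ) (v : Fin k → V) (hinj : Function.Injective v)
    (hrange : ∀ u, T.degree u ≠ 1 ↔ ∃ i, v i = u)
    (hpath : ∀ i j : Fin k, T.Adj (v i) (v j) ↔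
      (i.val + 1 = j.val ∨ j.val + 1 = i.val)) :
    (SimpleGraph.fromRel (MaxMatchable T)).edgeSet.ncard =
      (Finset.univ.filter fun u => T.degree u = 1).card +
        ∑ i : Fin k, (if h : i.val + 1 < k then
          pendantNbrs T (v i) * pendantNbrs T (v ⟨i.val + 1, h⟩) else 0) := by
  classical
  have hset : (SimpleGraph.fromRel (MaxMatchable T)).edgeSet =
      ↑(pendantEdges T v ∪ Finset.univ.biUnion (crossEdges T v)) := by
    ext e
    induction e using Sym2.ind with
    | _ a b =>
      rw [SimpleGraph.mem_edgeSet, SimpleGraph.fromRel_adj]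
      rw [Finset.coe_union, Set.mem_union, Finset.mem_coe, Finset.mem_coe]
      constructor
      · rintro ⟨hne, hm⟩
        have main : ∀ {x y : V}, MaxMatchable T x y →
            (s(x, y) ∈ pendantEdges T v ∨ s(x, y) ∈ Finset.univ.biUnion (crossEdges T v)) := by
          intro x y hm'
          rcases forward_char hT hrange hinj hpath hm' with ⟨i, p, h1, h2, h3⟩ |
            ⟨i, j, hij, p, q, h1, h2, h3, h4, h5⟩
          · exact Or.inl (mem_pendantEdges.mpr ⟨i, p, h1, h2, h3⟩)
          · right
            rw [Finset.mem_biUnion]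
            have hlt : i.val + 1 < k := by have := j.isLt; omega
            refine ⟨i, Finset.mem_univ _, mem_crossEdges.mpr ⟨hlt, p, q, h1, h2, h3, ?_, h5⟩⟩
            have hj : (⟨i.val + 1, hlt⟩ : Fin k) = j := Fin.ext hij
            rw [hj]; exact h4
        rcases hm with hm | hm
        · exact main hm
        · rw [Sym2.eq_swap (a := a) (b := b)]
          exact main hm
      · intro hmem
        rcases hmem with hmem | hmem
        · rw [mem_pendantEdges] at hmem
          obtain ⟨i, p, h1, h2, h3⟩ := hmem
          rw [Sym2.eq_iff] at h3
          rcases h3 with ⟨ha, hb⟩ | ⟨ha, hb⟩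
          · subst ha; subst hb
            exact ⟨h2.ne, Or.inr (backward_pendant hT hrange hinj h1 h2)⟩
          · subst ha; subst hb
            exact ⟨h2.ne', Or.inl (backward_pendant hT hrange hinj h1 h2)⟩
        · rw [Finset.mem_biUnion] at hmem
          obtain ⟨i, _, hei⟩ := hmem
          rw [mem_crossEdges] at hei
          obtain ⟨hlt, p, q, h1, h2, h3, h4, h5⟩ := hei
          have hmm : MaxMatchable T p q :=
            backward_cross hT hrange hinj hpath (j := ⟨i.val + 1, hlt⟩) rfl h1 h2 h3 h4
          have hpq : p ≠ q := by
            intro h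
            have heq1 := hinj (uniqNbr h1 h3.symm (by rw [h]; exact h4.symm))
            have heq2 := congrArg Fin.val heq1
            simp at heq2
          rw [Sym2.eq_iff] at h5
          rcases h5 with ⟨ha, hb⟩ | ⟨ha, hb⟩
          · subst ha; subst hb; exact ⟨hpq, Or.inl hmm⟩
          · subst ha; subst hb; exact ⟨hpq.symm, Or.inr hmm⟩
  rw [hset, Set.ncard_coe_finset,
    Finset.card_union_of_disjoint (pendant_cross_disjoint hrange),
    Finset.card_biUnion (fun i _ j _ hij => crossEdges_disjoint hrange hinj hij),
    card_pendantEdges hT hrange hinj]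
  congr 1
  apply Finset.sum_congr rfl
  intro i _
  exact card_crossEdges hrange hinj i
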